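/- Let R > 0, let k_c : [0,R]×[0,R] → ℝ be continuous and symmetric (k_c(x,y) = k_c(y,x)), and let u : [0,R] → ℝ be continuous. Then ∫_0^R x · Q^R_c(u)(x) dx = 0, i.e. the truncated coagulation operator (in which a polymer of size x cannot coagulate with a polymer of size greater than R−x) exactly conserves the total mass on [0,R]. -/

import Mathlib

open MeasureTheory Set

/-- The truncated coagulation operator
`Q^R_c(u)(x) = (1/2)∫_0^x k_c(y,x−y) u(y) u(x−y) dy − u(x) ∫_0^{R−x} k_c(x,y) u(y) dy`. -/
noncomputable def QcR (R : ℝ) (kc : ℝ → ℝ → ℝ) (u : ℝ → ℝ) (x : ℝ) : ℝ :=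
  (1 / 2) * (∫ y in (0:ℝ)..x, kc y (x - y) * u y * u (x - y))
    - u x * ∫ y in (0:ℝ)..(R - x), kc x y * u y

lemma swap_triangle {R : ℝ} (hR : 0 ≤ R) {g : ℝ → ℝ → ℝ}
    (hg : Continuous fun p : ℝ × ℝ => g p.1 p.2) :
    (∫ x in (0:ℝ)..R, ∫ y in (0:ℝ)..x, g x y)
      = ∫ y in (0:ℝ)..R, ∫ x in y..R, g x y := by
  have hmeas : MeasurableSet {p : ℝ × ℝ | p.2 < p.1} :=
    measurableSet_lt measurable_snd measurable_fst
  set f : ℝ × ℝ → ℝ := {p : ℝ × ℝ | p.2 < p.1}.indicator (fun p => g p.1 p.2) with hf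
  have hint : Integrable (Function.uncurry (fun x y => f (x, y)))
      ((volume.restrict (Ioc 0 R)).prod (volume.restrict (Ioc 0 R))) := by
    rw [Measure.prod_restrict, ← Measure.volume_eq_prod]
    have h1 : IntegrableOn (fun p : ℝ × ℝ => g p.1 p.2) (Ioc 0 R ×ˢ Ioc 0 R) :=
      (hg.continuousOn.integrableOn_compact (isCompact_Icc.prod isCompact_Icc)).mono_set
        (Set.prod_mono Ioc_subset_Icc_self Ioc_subset_Icc_self)
    exact h1.indicator hmeas
  have LHS : (∫ x in (0:ℝ)..R, ∫ y in (0:ℝ)..x, g x y)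
      = ∫ x in Ioc (0:ℝ) R, ∫ y in Ioc (0:ℝ) R, f (x, y) := by
    rw [intervalIntegral.integral_of_le hR]
    apply setIntegral_congr_fun measurableSet_Ioc
    intro x hx
    dsimp only
    have h1 : (fun y => f (x, y)) = (Iio x).indicator (fun y => g x y) := by
      funext y
      simp [hf, Set.indicator_apply, Set.mem_setOf_eq]
    rw [intervalIntegral.integral_of_le hx.1.le, h1,
      setIntegral_indicator measurableSet_Iio]
    have h2 : Ioc (0:ℝ) R ∩ Iio x = Ioo 0 x := by
      ext t
      simp only [mem_inter_iff, mem_Ioc, mem_Iio, mem_Ioo]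
      exact ⟨fun h => ⟨h.1.1, h.2⟩, fun h => ⟨⟨h.1, h.2.le.trans hx.2⟩, h.2⟩⟩
    rw [h2, ← MeasureTheory.integral_Ioc_eq_integral_Ioo]
  have RHS : (∫ y in (0:ℝ)..R, ∫ x in y..R, g x y)
      = ∫ y in Ioc (0:ℝ) R, ∫ x in Ioc (0:ℝ) R, f (x, y) := by
    rw [intervalIntegral.integral_of_le hR]
    apply setIntegral_congr_fun measurableSet_Ioc
    intro y hy
    dsimp only
    have h1 : (fun x => f (x, y)) = (Ioi y).indicator (fun x => g x y) := by
      funext x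
      simp [hf, Set.indicator_apply, Set.mem_setOf_eq]
    rw [intervalIntegral.integral_of_le hy.2, h1,
      setIntegral_indicator measurableSet_Ioi]
    have h2 : Ioc (0:ℝ) R ∩ Ioi y = Ioc y R := by
      ext t
      simp only [mem_inter_iff, mem_Ioc, mem_Ioi]
      exact ⟨fun h => ⟨h.2, h.1.2⟩, fun h => ⟨⟨hy.1.trans h.1, h.2⟩, h.1⟩⟩
    rw [h2]
  rw [LHS, RHS]
  exact MeasureTheory.integral_integral_swap hint

lemma reflect01 (f : ℝ → ℝ) (x : ℝ) :
    (∫ y in (0:ℝ)..x, f (x - y)) = ∫ y in (0:ℝ)..x, f y := by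
  rw [intervalIntegral.integral_comp_sub_left f x, sub_self, sub_zero]

lemma shiftc (f : ℝ → ℝ) (y R : ℝ) :
    (∫ x in y..R, f (x - y)) = ∫ z in (0:ℝ)..(R - y), f z := by
  rw [intervalIntegral.integral_comp_sub_right f y, sub_self]

lemma key (R : ℝ) (hR : 0 ≤ R) (K : ℝ → ℝ → ℝ) (U : ℝ → ℝ)
    (hK : Continuous fun p : ℝ × ℝ => K p.1 p.2)
    (hKs : ∀ x y, K x y = K y x) (hU : Continuous U) :
    ∫ x in (0:ℝ)..R, x * QcR R K U x = 0 := by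
  have hKc : ∀ {f g : ℝ × ℝ → ℝ}, Continuous f → Continuous g →
      Continuous fun p : ℝ × ℝ => K (f p) (g p) := fun hf hg => hK.comp (hf.prodMk hg)
  -- continuity facts
  have c1 : Continuous fun p : ℝ × ℝ => p.1 * (K p.2 (p.1 - p.2) * U p.2 * U (p.1 - p.2)) :=
    continuous_fst.mul (((hKc continuous_snd (continuous_fst.sub continuous_snd)).mul
      (hU.comp continuous_snd)).mul (hU.comp (continuous_fst.sub continuous_snd)))
  have c2 : Continuous fun p : ℝ × ℝ => K p.1 p.2 * U p.2 :=
    (hKc continuous_fst continuous_snd).mul (hU.comp continuous_snd)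
  have c3 : Continuous fun p : ℝ × ℝ => p.2 * (K p.1 p.2 * U p.1 * U p.2) :=
    continuous_snd.mul (((hKc continuous_fst continuous_snd).mul
      (hU.comp continuous_fst)).mul (hU.comp continuous_snd))
  have c4 : Continuous fun p : ℝ × ℝ => p.1 * (K p.1 p.2 * U p.1 * U p.2) :=
    continuous_fst.mul (((hKc continuous_fst continuous_snd).mul
      (hU.comp continuous_fst)).mul (hU.comp continuous_snd))
  have c5 : Continuous fun p : ℝ × ℝ => p.2 * (K p.2 (p.1 - p.2) * U p.2 * U (p.1 - p.2)) :=
    continuous_snd.mul (((hKc continuous_snd (continuous_fst.sub continuous_snd)).mul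
      (hU.comp continuous_snd)).mul (hU.comp (continuous_fst.sub continuous_snd)))
  have hKy : ∀ y : ℝ, Continuous fun z : ℝ => K y z := fun y =>
    hK.comp (continuous_const.prodMk continuous_id)
  -- parametric continuity
  have A1 : Continuous fun x : ℝ => ∫ y in (0:ℝ)..x, x * (K y (x - y) * U y * U (x - y)) :=
    intervalIntegral.continuous_parametric_intervalIntegral_of_continuous
      (f := fun x y => x * (K y (x - y) * U y * U (x - y))) c1 continuous_id
  have A2 : Continuous fun x : ℝ => ∫ y in (0:ℝ)..(R - x), K x y * U y :=
    intervalIntegral.continuous_parametric_intervalIntegral_of_continuous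
      (f := fun x y => K x y * U y) c2 (continuous_const.sub continuous_id)
  have B1 : Continuous fun y : ℝ => ∫ z in (0:ℝ)..(R - y), z * (K y z * U y * U z) :=
    intervalIntegral.continuous_parametric_intervalIntegral_of_continuous
      (f := fun y z => z * (K y z * U y * U z)) c3 (continuous_const.sub continuous_id)
  have B2 : Continuous fun y : ℝ => ∫ z in (0:ℝ)..(R - y), y * (K y z * U y * U z) :=
    intervalIntegral.continuous_parametric_intervalIntegral_of_continuous
      (f := fun y z => y * (K y z * U y * U z)) c4 (continuous_const.sub continuous_id)
  -- split the goal integral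
  have split : (∫ x in (0:ℝ)..R, x * QcR R K U x)
      = (1/2) * (∫ x in (0:ℝ)..R, ∫ y in (0:ℝ)..x, x * (K y (x - y) * U y * U (x - y)))
        - ∫ x in (0:ℝ)..R, (x * U x) * ∫ y in (0:ℝ)..(R - x), K x y * U y := by
    have e : (fun x : ℝ => x * QcR R K U x) = fun x =>
        (1/2) * (∫ y in (0:ℝ)..x, x * (K y (x - y) * U y * U (x - y)))
          - (x * U x) * ∫ y in (0:ℝ)..(R - x), K x y * U y := by
      funext x
      simp only [QcR]
      rw [intervalIntegral.integral_const_mul]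
      ring
    rw [e, intervalIntegral.integral_sub
      ((show Continuous fun x : ℝ =>
          1/2 * ∫ y in (0:ℝ)..x, x * (K y (x - y) * U y * U (x - y)) from
        continuous_const.mul A1).intervalIntegrable _ _)
      ((show Continuous fun x : ℝ =>
          (x * U x) * ∫ y in (0:ℝ)..(R - x), K x y * U y from
        (continuous_id'.mul hU).mul A2).intervalIntegrable _ _),
      intervalIntegral.integral_const_mul]
  -- T1 computation
  have swap1 : (∫ x in (0:ℝ)..R, ∫ y in (0:ℝ)..x, x * (K y (x - y) * U y * U (x - y)))
      = ∫ y in (0:ℝ)..R, ∫ x in y..R, x * (K y (x - y) * U y * U (x - y)) :=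
    swap_triangle hR (g := fun x y => x * (K y (x - y) * U y * U (x - y))) c1
  have step2 : ∀ y : ℝ, (∫ x in y..R, x * (K y (x - y) * U y * U (x - y)))
      = ∫ z in (0:ℝ)..(R - y), (z + y) * (K y z * U y * U z) := by
    intro y
    have e : (fun x : ℝ => x * (K y (x - y) * U y * U (x - y)))
        = fun x => (fun z => (z + y) * (K y z * U y * U z)) (x - y) := by
      funext x
      simp only
      rw [sub_add_cancel]
    rw [e]
    exact shiftc (fun z => (z + y) * (K y z * U y * U z)) y R
  have inner_split : ∀ y : ℝ, (∫ z in (0:ℝ)..(R - y), (z + y) * (K y z * U y * U z))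
      = (∫ z in (0:ℝ)..(R - y), z * (K y z * U y * U z))
        + ∫ z in (0:ℝ)..(R - y), y * (K y z * U y * U z) := by
    intro y
    rw [← intervalIntegral.integral_add
      ((show Continuous fun z : ℝ => z * (K y z * U y * U z) from
        continuous_id'.mul (((hKy y).mul continuous_const).mul hU)).intervalIntegrable _ _)
      ((show Continuous fun z : ℝ => y * (K y z * U y * U z) from
        continuous_const.mul (((hKy y).mul continuous_const).mul hU)).intervalIntegrable _ _)]
    apply intervalIntegral.integral_congr
    intro z _
    ring
  have T1eq : (∫ x in (0:ℝ)..R, ∫ y in (0:ℝ)..x, x * (K y (x - y) * U y * U (x - y)))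
      = (∫ y in (0:ℝ)..R, ∫ z in (0:ℝ)..(R - y), z * (K y z * U y * U z))
        + ∫ y in (0:ℝ)..R, ∫ z in (0:ℝ)..(R - y), y * (K y z * U y * U z) := by
    rw [swap1, intervalIntegral.integral_congr (fun y _ => (step2 y).trans (inner_split y)),
      intervalIntegral.integral_add (B1.intervalIntegrable _ _) (B2.intervalIntegrable _ _)]
  -- symmetry: S1 = S2
  have S1eq : (∫ y in (0:ℝ)..R, ∫ z in (0:ℝ)..(R - y), z * (K y z * U y * U z))
      = ∫ y in (0:ℝ)..R, ∫ z in (0:ℝ)..(R - y), y * (K y z * U y * U z) := by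
    have a : ∀ y : ℝ, (∫ z in (0:ℝ)..(R - y), z * (K y z * U y * U z))
        = ∫ x in y..R, (x - y) * (K y (x - y) * U y * U (x - y)) :=
      fun y => (shiftc (fun z => z * (K y z * U y * U z)) y R).symm
    have b : (∫ y in (0:ℝ)..R, ∫ x in y..R, (x - y) * (K y (x - y) * U y * U (x - y)))
        = ∫ x in (0:ℝ)..R, ∫ y in (0:ℝ)..x, (x - y) * (K y (x - y) * U y * U (x - y)) := by
      refine (swap_triangle hR (g := fun x y => (x - y) * (K y (x - y) * U y * U (x - y))) ?_).symm
      exact (continuous_fst.sub continuous_snd).mul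
        (((hKc continuous_snd (continuous_fst.sub continuous_snd)).mul
          (hU.comp continuous_snd)).mul (hU.comp (continuous_fst.sub continuous_snd)))
    have c : ∀ x : ℝ, (∫ y in (0:ℝ)..x, (x - y) * (K y (x - y) * U y * U (x - y)))
        = ∫ y in (0:ℝ)..x, y * (K y (x - y) * U y * U (x - y)) := by
      intro x
      calc (∫ y in (0:ℝ)..x, (x - y) * (K y (x - y) * U y * U (x - y)))
          = ∫ y in (0:ℝ)..x,
              (fun t => (x - t) * (K t (x - t) * U t * U (x - t))) (x - y) :=
            (reflect01 (fun t => (x - t) * (K t (x - t) * U t * U (x - t))) x).symm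
        _ = ∫ y in (0:ℝ)..x, y * (K y (x - y) * U y * U (x - y)) := by
            apply intervalIntegral.integral_congr
            intro y _
            simp only
            rw [sub_sub_cancel, hKs]
            ring
    have d : (∫ x in (0:ℝ)..R, ∫ y in (0:ℝ)..x, y * (K y (x - y) * U y * U (x - y)))
        = ∫ y in (0:ℝ)..R, ∫ x in y..R, y * (K y (x - y) * U y * U (x - y)) :=
      swap_triangle hR (g := fun x y => y * (K y (x - y) * U y * U (x - y))) c5
    have e : ∀ y : ℝ, (∫ x in y..R, y * (K y (x - y) * U y * U (x - y)))
        = ∫ z in (0:ℝ)..(R - y), y * (K y z * U y * U z) :=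
      fun y => shiftc (fun z => y * (K y z * U y * U z)) y R
    rw [intervalIntegral.integral_congr (fun y _ => a y), b,
      intervalIntegral.integral_congr (fun x _ => c x), d,
      intervalIntegral.integral_congr (fun y _ => e y)]
  -- S2 = T2
  have S2eq : (∫ y in (0:ℝ)..R, ∫ z in (0:ℝ)..(R - y), y * (K y z * U y * U z))
      = ∫ x in (0:ℝ)..R, (x * U x) * ∫ y in (0:ℝ)..(R - x), K x y * U y := by
    apply intervalIntegral.integral_congr
    intro y _
    simp only
    calc (∫ z in (0:ℝ)..(R - y), y * (K y z * U y * U z))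
        = ∫ z in (0:ℝ)..(R - y), (y * U y) * (K y z * U z) := by
          apply intervalIntegral.integral_congr
          intro z _
          ring
      _ = (y * U y) * ∫ z in (0:ℝ)..(R - y), K y z * U z :=
          intervalIntegral.integral_const_mul _ _
  rw [split, T1eq, S1eq, S2eq]
  ring

/-- the truncated coagulation operator exactly conserves the total mass
on `[0,R]`. -/
theorem truncated_coagulation_mass_conservation
    (R : ℝ) (hR : 0 < R) (kc : ℝ → ℝ → ℝ) (u : ℝ → ℝ)
    (hkc_cont : ContinuousOn (fun p : ℝ × ℝ => kc p.1 p.2) (Set.Icc 0 R ×ˢ Set.Icc 0 R))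
    (hkc_symm : ∀ x ∈ Set.Icc (0:ℝ) R, ∀ y ∈ Set.Icc (0:ℝ) R, kc x y = kc y x)
    (hu_cont : ContinuousOn u (Set.Icc 0 R)) :
    ∫ x in (0:ℝ)..R, x * QcR R kc u x = 0 := by
  set cl : ℝ → ℝ := fun t => max 0 (min R t) with hcl
  have hcl_cont : Continuous cl := continuous_const.max (continuous_const.min continuous_id)
  have hcl_mem : ∀ t : ℝ, cl t ∈ Icc (0:ℝ) R :=
    fun t => ⟨le_max_left _ _, max_le hR.le (min_le_left _ _)⟩
  have hcl_id : ∀ t ∈ Icc (0:ℝ) R, cl t = t := by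
    intro t ht
    simp only [hcl]
    rw [min_eq_right ht.2, max_eq_right ht.1]
  set U : ℝ → ℝ := fun t => u (cl t) with hUdef
  set K : ℝ → ℝ → ℝ := fun a b => kc (cl a) (cl b) with hKdef
  have hU : Continuous U := hu_cont.comp_continuous hcl_cont hcl_mem
  have hK : Continuous fun p : ℝ × ℝ => K p.1 p.2 := by
    apply hkc_cont.comp_continuous
      ((hcl_cont.comp continuous_fst).prodMk (hcl_cont.comp continuous_snd))
    intro p
    exact Set.mem_prod.2 ⟨hcl_mem _, hcl_mem _⟩
  have hKs : ∀ a b, K a b = K b a :=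
    fun a b => hkc_symm _ (hcl_mem a) _ (hcl_mem b)
  have congrQ : ∀ x ∈ Icc (0:ℝ) R, QcR R kc u x = QcR R K U x := by
    intro x hx
    have hUx : u x = U x := by rw [hUdef]; simp only; rw [hcl_id x hx]
    simp only [QcR]
    congr 1
    · congr 1
      apply intervalIntegral.integral_congr
      intro y hy
      rw [uIcc_of_le hx.1] at hy
      have hy1 : y ∈ Icc (0:ℝ) R := ⟨hy.1, hy.2.trans hx.2⟩
      have hy2 : x - y ∈ Icc (0:ℝ) R := ⟨by linarith [hy.2], by linarith [hy.1, hx.2]⟩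
      simp only [hKdef, hUdef]
      rw [hcl_id _ hy1, hcl_id _ hy2]
    · rw [hUx]
      congr 1
      apply intervalIntegral.integral_congr
      intro y hy
      rw [uIcc_of_le (by linarith [hx.2] : (0:ℝ) ≤ R - x)] at hy
      have hy1 : y ∈ Icc (0:ℝ) R := ⟨hy.1, by linarith [hy.2, hx.1]⟩
      simp only [hKdef, hUdef]
      rw [hcl_id _ hx, hcl_id _ hy1]
  have : (∫ x in (0:ℝ)..R, x * QcR R kc u x) = ∫ x in (0:ℝ)..R, x * QcR R K U x := by
    apply intervalIntegral.integral_congr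
    intro x hx
    rw [uIcc_of_le hR.le] at hx
    dsimp only
    rw [congrQ x hx]
  rw [this]
  exact key R hR.le K U hK hKs hU
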